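/- Let (\{f_n\},\{τ_n\}) be a p-ABS for X. A p-ABS (\{g_n\},\{ω_n\}) is an approximately dual p-ABS for (\{f_n\},\{τ_n\}) if and only if there exist bounded invertible operators U, V : X → X with ‖I_X − U‖ < 1 and ‖I_X − V‖ < 1 such that (\{g_n ∘ U^{-1}\}, \{V^{-1} ω_n\}) is a dual p-ABS for (\{f_n\},\{τ_n\}). -/
import Mathlib


open scoped ENNReal
open Filter Topology

noncomputable section

/-- The sequence space `ℓ^p(ℕ)` over `ℝ`. -/
abbrev lpN (p : ℝ≥0∞) := lp (fun _ : ℕ => ℝ) p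

/-- A pair `({f_n}, {τ_n})` is a p-approximate Bessel sequence (p-ABS) for `X`:
the analysis map `x ↦ (f_n x)_n` is a well-defined bounded linear operator into `ℓ^p`,
and the synthesis map `(a_n) ↦ Σ a_n τ_n` is a well-defined bounded linear operator. -/
def IsPABS (p : ℝ≥0∞) [Fact (1 ≤ p)] {X : Type*} [NormedAddCommGroup X] [NormedSpace ℝ X]
    (f : ℕ → X →L[ℝ] ℝ) (τ : ℕ → X) : Prop :=
  (∃ θf : X →L[ℝ] lpN p, ∀ (x : X) (n : ℕ), (θf x) n = f n x) ∧
  (∃ θτ : lpN p →L[ℝ] X, ∀ a : lpN p, HasSum (fun n => (a n) • τ n) (θτ a))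

/-- A pair `({f_n}, {τ_n})` is a p-approximate Schauder frame (p-ASF) for `X`:
it is a p-ABS whose frame operator `S_{f,τ} = θ_τ ∘ θ_f` is bounded invertible. -/
def IsPASF (p : ℝ≥0∞) [Fact (1 ≤ p)] {X : Type*} [NormedAddCommGroup X] [NormedSpace ℝ X]
    (f : ℕ → X →L[ℝ] ℝ) (τ : ℕ → X) : Prop :=
  ∃ (θf : X →L[ℝ] lpN p) (θτ : lpN p →L[ℝ] X) (S : X ≃L[ℝ] X),
    (∀ (x : X) (n : ℕ), (θf x) n = f n x) ∧
    (∀ a : lpN p, HasSum (fun n => (a n) • τ n) (θτ a)) ∧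
    (S : X →L[ℝ] X) = θτ.comp θf
/-- a p-ABS `({g_n},{ω_n})` is an approximately dual p-ABS for `({f_n},{τ_n})`
iff there are bounded invertible `U, V : X → X` with `‖I - U‖ < 1`, `‖I - V‖ < 1` such that
`({g_n ∘ U⁻¹}, {V⁻¹ ω_n})` is a dual p-ABS for `({f_n},{τ_n})`. -/
theorem approx_dual_iff_perturbed_dual
    {X : Type*} [NormedAddCommGroup X] [NormedSpace ℝ X] [CompleteSpace X]
    (p : ℝ≥0∞) [Fact (1 ≤ p)] (hp : p ≠ ∞)
    (f g : ℕ → X →L[ℝ] ℝ) (τ ω : ℕ → X)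
    (θf θg : X →L[ℝ] lpN p) (θτ θω : lpN p →L[ℝ] X)
    (hθf : ∀ (x : X) (n : ℕ), (θf x) n = f n x)
    (hθg : ∀ (x : X) (n : ℕ), (θg x) n = g n x)
    (hθτ : ∀ a : lpN p, HasSum (fun n => (a n) • τ n) (θτ a))
    (hθω : ∀ a : lpN p, HasSum (fun n => (a n) • ω n) (θω a)) :
    (‖ContinuousLinearMap.id ℝ X - θω.comp θf‖ < 1 ∧
     ‖ContinuousLinearMap.id ℝ X - θτ.comp θg‖ < 1) ↔
    ∃ U V : X ≃L[ℝ] X,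
      ‖ContinuousLinearMap.id ℝ X - (U : X →L[ℝ] X)‖ < 1 ∧
      ‖ContinuousLinearMap.id ℝ X - (V : X →L[ℝ] X)‖ < 1 ∧
      IsPABS p (fun n => (g n).comp (U.symm : X →L[ℝ] X)) (fun n => V.symm (ω n)) ∧
      (∀ x : X,
        HasSum (fun n => g n (U.symm x) • τ n) x ∧
        HasSum (fun n => f n x • V.symm (ω n)) x) := by
  constructor
  · rintro ⟨h1, h2⟩
    -- V from θω∘θf, U from θτ∘θg
    have h1' : ‖(1 : X →L[ℝ] X) - θω.comp θf‖ < 1 := h1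
    have h2' : ‖(1 : X →L[ℝ] X) - θτ.comp θg‖ < 1 := h2
    set uV : (X →L[ℝ] X)ˣ := Units.oneSub _ h1' with huV
    set uU : (X →L[ℝ] X)ˣ := Units.oneSub _ h2' with huU
    refine ⟨ContinuousLinearEquiv.ofUnit uU, ContinuousLinearEquiv.ofUnit uV, ?_, ?_, ?_, ?_⟩
    · have : ((ContinuousLinearEquiv.ofUnit uU : X ≃L[ℝ] X) : X →L[ℝ] X) = θτ.comp θg := by
        show uU.val = _
        simp [huU, Units.oneSub]
      rw [this]; exact h2
    · have : ((ContinuousLinearEquiv.ofUnit uV : X ≃L[ℝ] X) : X →L[ℝ] X) = θω.comp θf := by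
        show uV.val = _
        simp [huV, Units.oneSub]
      rw [this]; exact h1
    · constructor
      · refine ⟨θg.comp ((ContinuousLinearEquiv.ofUnit uU).symm : X →L[ℝ] X), fun x n => ?_⟩
        simp [hθg]
      · refine ⟨((ContinuousLinearEquiv.ofUnit uV).symm : X →L[ℝ] X).comp θω, fun a => ?_⟩
        have := ((ContinuousLinearEquiv.ofUnit uV).symm : X →L[ℝ] X).hasSum (hθω a)
        simpa using this
    · intro x
      have hUval : ∀ y, θτ (θg y) = (ContinuousLinearEquiv.ofUnit uU) y := by
        intro y
        show _ = uU.val y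
        simp [huU, Units.oneSub]
      have hVval : ∀ y, θω (θf y) = (ContinuousLinearEquiv.ofUnit uV) y := by
        intro y
        show _ = uV.val y
        simp [huV, Units.oneSub]
      constructor
      · have := hθτ (θg ((ContinuousLinearEquiv.ofUnit uU).symm x))
        simp only [hθg] at this
        rwa [hUval, ContinuousLinearEquiv.apply_symm_apply] at this
      · have h := ((ContinuousLinearEquiv.ofUnit uV).symm : X →L[ℝ] X).hasSum (hθω (θf x))
        simp only [hθf, map_smul] at h
        rw [hVval] at h
        simpa using h
  · rintro ⟨U, V, hU, hV, _, hdual⟩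
    have hUeq : θτ.comp θg = (U : X →L[ℝ] X) := by
      ext y
      have h1 := (hdual (U y)).1
      simp only [ContinuousLinearEquiv.symm_apply_apply] at h1
      have h2 := hθτ (θg y)
      simp only [hθg] at h2
      exact h2.unique h1
    have hVeq : θω.comp θf = (V : X →L[ℝ] X) := by
      ext y
      have h1 := (hdual y).2
      have h1' := (V : X →L[ℝ] X).hasSum h1
      simp only [map_smul, ContinuousLinearEquiv.coe_coe,
        ContinuousLinearEquiv.apply_symm_apply] at h1'
      have h2 := hθω (θf y)
      simp only [hθf] at h2
      exact h2.unique h1'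
    rw [hUeq, hVeq]
    exact ⟨hV, hU⟩
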